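/- Under these hypotheses, for every vector v in the subspace Vₙ = span{ (Π_{i∈S} Bᵢ) ψ : S ⊆ {1,…,n} } and every i ∈ {1,…,n}, one has (AᵢBᵢ + BᵢAᵢ) v = 0; that is, the anticommutator {Aᵢ, Bᵢ} vanishes identically on Vₙ, so the compressions of Aᵢ and Bᵢ to Vₙ anticommute. -/

import Mathlib

/-- The product `Π_{i ∈ S} T i` of the operators `T i`, `i ∈ S`, multiplied in
increasing order of the index; all products used below are over pairwise commuting
operators, so the order of the factors is irrelevant. -/
noncomputable def prodOver {H : Type*} [NormedAddCommGroup H] [InnerProductSpace ℂ H]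
    {n : ℕ} (T : Fin n → H →L[ℂ] H) (S : Finset (Fin n)) : H →L[ℂ] H :=
  ((S.sort (· ≤ ·)).map T).prod

section Aux

variable {H : Type*} [NormedAddCommGroup H] [InnerProductSpace ℂ H] {n : ℕ}

lemma listProd_comm (T : H →L[ℂ] H) (B : Fin n → H →L[ℂ] H) (l : List (Fin n))
    (h : ∀ m ∈ l, ∀ x : H, T (B m x) = B m (T x)) (x : H) :
    T ((l.map B).prod x) = (l.map B).prod (T x) := by
  induction l with
  | nil => simp
  | cons a t ih =>
    simp only [List.map_cons, List.prod_cons, ContinuousLinearMap.mul_apply]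
    rw [h a List.mem_cons_self, ih (fun m hm => h m (List.mem_cons_of_mem _ hm))]

lemma prodOver_comm (T : H →L[ℂ] H) (B : Fin n → H →L[ℂ] H) (S : Finset (Fin n))
    (h : ∀ m ∈ S, ∀ x : H, T (B m x) = B m (T x)) (x : H) :
    T (prodOver B S x) = prodOver B S (T x) :=
  listProd_comm T B _ (fun m hm => h m (by simpa using hm)) x

lemma prodOver_empty (B : Fin n → H →L[ℂ] H) (x : H) :
    prodOver B (∅ : Finset (Fin n)) x = x := by
  simp [prodOver]

lemma prodOver_singleton (B : Fin n → H →L[ℂ] H) (a : Fin n) (x : H) :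
    prodOver B ({a} : Finset (Fin n)) x = B a x := by
  simp [prodOver, Finset.sort_singleton]

lemma prodOver_insert (B : Fin n → H →L[ℂ] H)
    (hc : ∀ i j : Fin n, i ≠ j → Commute (B i) (B j))
    (a : Fin n) (S : Finset (Fin n)) (ha : a ∉ S) (x : H) :
    prodOver B (insert a S) x = B a (prodOver B S x) := by
  have hperm : ((insert a S).sort (· ≤ ·)).Perm (a :: S.sort (· ≤ ·)) :=
    ((Finset.sort_perm_toList _ _).trans (Finset.toList_insert ha)).trans
      (List.Perm.cons a (Finset.sort_perm_toList _ _).symm)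
  have hpw : (((insert a S).sort (· ≤ ·)).map B).Pairwise Commute :=
    List.Pairwise.map B (fun i j h => hc i j h) (Finset.sort_nodup _ _)
  have hprod : prodOver B (insert a S) = ((a :: S.sort (· ≤ ·)).map B).prod :=
    List.Perm.prod_eq' (hperm.map B) hpw
  rw [hprod]
  simp [prodOver, ContinuousLinearMap.mul_apply]

lemma listProd_sq (B : Fin n → H →L[ℂ] H)
    (hBinv : ∀ i (x : H), B i (B i x) = x)
    (hBB : ∀ i j, i ≠ j → ∀ x : H, B i (B j x) = B j (B i x))
    (l : List (Fin n)) (hl : l.Nodup) (x : H) :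
    (l.map B).prod ((l.map B).prod x) = x := by
  induction l with
  | nil => simp
  | cons a t ih =>
    have hat : a ∉ t := (List.nodup_cons.mp hl).1
    simp only [List.map_cons, List.prod_cons, ContinuousLinearMap.mul_apply]
    rw [← listProd_comm (B a) B t
      (fun m hm x => hBB a m (fun h => hat (h ▸ hm)) x) ((t.map B).prod x),
      hBinv, ih (List.nodup_cons.mp hl).2]

lemma prodOver_sq (B : Fin n → H →L[ℂ] H)
    (hBinv : ∀ i (x : H), B i (B i x) = x)
    (hBB : ∀ i j, i ≠ j → ∀ x : H, B i (B j x) = B j (B i x))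
    (S : Finset (Fin n)) (x : H) :
    prodOver B S (prodOver B S x) = x :=
  listProd_sq B hBinv hBB _ (Finset.sort_nodup _ _) x

end Aux

/-- under the maximal-violation hypotheses for `Iₙ` (setup as in
Statement 9), for every vector `v` in
`Vₙ = span{(Π_{i∈S} Bᵢ)ψ : S ⊆ {1,…,n}}` and every `i` one has
`(AᵢBᵢ + BᵢAᵢ) v = 0`: the anticommutator `{Aᵢ, Bᵢ}` vanishes identically on `Vₙ`,
so the compressions of `Aᵢ` and `Bᵢ` to `Vₙ` anticommute. -/
theorem stmt11 {H : Type*} [NormedAddCommGroup H] [InnerProductSpace ℂ H]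
    (n : ℕ) (hn : 3 ≤ n)
    (A B : Fin n → H →L[ℂ] H)
    (hAsa : ∀ i (x y : H), (inner ℂ (A i x) y : ℂ) = inner ℂ x (A i y))
    (hBsa : ∀ i (x y : H), (inner ℂ (B i x) y : ℂ) = inner ℂ x (B i y))
    (hAinv : ∀ i (x : H), A i (A i x) = x)
    (hBinv : ∀ i (x : H), B i (B i x) = x)
    (hAA : ∀ i j, i ≠ j → ∀ x : H, A i (A j x) = A j (A i x))
    (hAB : ∀ i j, i ≠ j → ∀ x : H, A i (B j x) = B j (A i x))
    (hBB : ∀ i j, i ≠ j → ∀ x : H, B i (B j x) = B j (B i x))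
    (ψ : H) (hψ : ‖ψ‖ = 1)
    (hplus : ∀ i, A i (prodOver B (Finset.univ.erase i) ψ) = ψ)
    (hminus : ∀ S : Finset (Fin n), S.card = 3 →
      prodOver A S (prodOver B Sᶜ ψ) = -ψ)
    (V : Submodule ℂ H)
    (hV : V = Submodule.span ℂ {v : H | ∃ S : Finset (Fin n), v = prodOver B S ψ}) :
    ∀ v ∈ V, ∀ i, A i (B i v) + B i (A i v) = 0 := by
  -- commutation as `Commute`
  have hAAc : ∀ i j : Fin n, i ≠ j → Commute (A i) (A j) := fun i j h =>
    ContinuousLinearMap.ext fun x => hAA i j h x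
  have hBBc : ∀ i j : Fin n, i ≠ j → Commute (B i) (B j) := fun i j h =>
    ContinuousLinearMap.ext fun x => hBB i j h x
  -- A r ψ as a product of B's
  have hAr : ∀ r : Fin n, prodOver B (Finset.univ.erase r) ψ = A r ψ := by
    intro r
    have h := congrArg (A r) (hplus r)
    rwa [hAinv] at h
  -- B r (A r ψ) = prodOver B univ ψ
  have hBA : ∀ r : Fin n, B r (A r ψ) = prodOver B Finset.univ ψ := by
    intro r
    rw [← hAr r, ← prodOver_insert B hBBc r _ (Finset.notMem_erase r _),
      Finset.insert_erase (Finset.mem_univ r)]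
  -- Core anticommutation on ψ
  have key : ∀ t : Fin n, A t (B t ψ) = -(B t (A t ψ)) := by
    intro t
    -- pick two other indices
    have h2 : 1 < (Finset.univ.erase t).card := by
      rw [Finset.card_erase_of_mem (Finset.mem_univ t), Finset.card_univ, Fintype.card_fin]
      omega
    obtain ⟨p, hp, q, hq, hpq⟩ := Finset.one_lt_card.mp h2
    have hpt : p ≠ t := (Finset.mem_erase.mp hp).1
    have hqt : q ≠ t := (Finset.mem_erase.mp hq).1
    set S : Finset (Fin n) := {p, t, q} with hSdef
    have hS3 : S.card = 3 := Finset.card_eq_three.mpr ⟨p, t, q, hpt, hpq, hqt.symm, rfl⟩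
    have hpS : p ∈ S := by simp [hSdef]
    have htS : t ∈ S := by simp [hSdef]
    have hqS : q ∈ S := by simp [hSdef]
    -- commuting through Q := prodOver B Sᶜ
    have hcomm : ∀ (T : H →L[ℂ] H) (r : Fin n), r ∈ S →
        (∀ m : Fin n, r ≠ m → ∀ x : H, T (B m x) = B m (T x)) →
        ∀ x : H, T (prodOver B Sᶜ x) = prodOver B Sᶜ (T x) := by
      intro T r hr hT x
      exact prodOver_comm T B Sᶜ
        (fun m hm y => hT m (fun h => (Finset.mem_compl.mp hm) (h ▸ hr)) y) x
    have hcAp : ∀ x : H, A p (prodOver B Sᶜ x) = prodOver B Sᶜ (A p x) :=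
      hcomm (A p) p hpS (fun m h x => hAB p m h x)
    have hcAt : ∀ x : H, A t (prodOver B Sᶜ x) = prodOver B Sᶜ (A t x) :=
      hcomm (A t) t htS (fun m h x => hAB t m h x)
    have hcBp : ∀ x : H, B p (prodOver B Sᶜ x) = prodOver B Sᶜ (B p x) :=
      hcomm (B p) p hpS (fun m h x => hBB p m h x)
    have hcBt : ∀ x : H, B t (prodOver B Sᶜ x) = prodOver B Sᶜ (B t x) :=
      hcomm (B t) t htS (fun m h x => hBB t m h x)
    -- expand prodOver A S
    have hSins : S = insert p (insert t ({q} : Finset (Fin n))) := rfl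
    have hexp : ∀ x : H, prodOver A S x = A p (A t (A q x)) := by
      intro x
      rw [hSins, prodOver_insert A hAAc p _ (by simp [hpt, hpq]),
        prodOver_insert A hAAc t _ (by simp [hqt.symm]), prodOver_singleton]
    have hm : A p (A t (A q (prodOver B Sᶜ ψ))) = -ψ := by
      rw [← hexp]; exact hminus S hS3
    -- derive A p (Q ψ) = -(A t (A q ψ))
    have e1 : A p (prodOver B Sᶜ ψ) = -(A t (A q ψ)) := by
      have h1 := congrArg (A t) hm
      rw [hAA t p hpt.symm, hAinv, map_neg] at h1
      -- h1 : A p (A q (Q ψ)) = -(A t ψ)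
      have h2 := congrArg (A q) h1
      rw [hAA q p (fun h => hpq h.symm), hAinv, map_neg, hAA q t hqt] at h2
      exact h2
    -- compute A t (A q ψ)
    have herase : Finset.univ.erase q = insert p (insert t Sᶜ) := by
      ext m
      simp only [Finset.mem_erase, Finset.mem_univ, and_true, Finset.mem_insert,
        Finset.mem_compl, hSdef, Finset.mem_singleton, not_or]
      constructor
      · intro hmq
        by_cases h1 : m = p
        · tauto
        · by_cases h2 : m = t
          · tauto
          · tauto
      · rintro (rfl | rfl | h) <;> tauto
    have hAq : A t (A q ψ) = B p (prodOver B Sᶜ (A t (B t ψ))) := by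
      rw [← hAr q, herase,
        prodOver_insert B hBBc p _ (by simp [hpt, hpS]),
        prodOver_insert B hBBc t _ (by simp [htS]),
        hAB t p hpt.symm, hcBt, hcAt]
    -- conclude
    have e2 : prodOver B Sᶜ (A p ψ) = -(B p (prodOver B Sᶜ (A t (B t ψ)))) := by
      rw [← hcAp, e1, hAq]
    have e3 : A p ψ = -(B p (A t (B t ψ))) := by
      have := congrArg (prodOver B Sᶜ) e2
      rw [prodOver_sq B hBinv hBB, map_neg, hcBp, prodOver_sq B hBinv hBB] at this
      exact this
    have e4 : B p (A p ψ) = -(A t (B t ψ)) := by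
      rw [e3, map_neg, hBinv]
    have e5 : A t (B t ψ) = -(B p (A p ψ)) := by rw [e4, neg_neg]
    rw [e5, hBA p, hBA t]
  -- key' : B t (A t (B t ψ)) = -(A t ψ)
  have key' : ∀ t : Fin n, B t (A t (B t ψ)) = -(A t ψ) := by
    intro t
    rw [key t, map_neg, hBinv]
  -- generators
  have gen : ∀ (t : Fin n) (Sg : Finset (Fin n)),
      A t (B t (prodOver B Sg ψ)) + B t (A t (prodOver B Sg ψ)) = 0 := by
    intro t Sg
    by_cases ht : t ∈ Sg
    · have hrw : Sg = insert t (Sg.erase t) := (Finset.insert_erase ht).symm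
      set S' := Sg.erase t with hS'
      have htS' : t ∉ S' := Finset.notMem_erase t Sg
      have hcA : ∀ x : H, A t (prodOver B S' x) = prodOver B S' (A t x) :=
        prodOver_comm (A t) B S'
          (fun m hm x => hAB t m (fun h => htS' (h ▸ hm)) x)
      have hcB : ∀ x : H, B t (prodOver B S' x) = prodOver B S' (B t x) :=
        prodOver_comm (B t) B S'
          (fun m hm x => hBB t m (fun h => htS' (h ▸ hm)) x)
      rw [hrw, prodOver_insert B hBBc t S' htS', hBinv, hcB, hcA, hcA, hcB,
        key' t, ← (prodOver B S').map_add, add_neg_cancel, map_zero]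
    · have hcA : ∀ x : H, A t (prodOver B Sg x) = prodOver B Sg (A t x) :=
        prodOver_comm (A t) B Sg
          (fun m hm x => hAB t m (fun h => ht (h ▸ hm)) x)
      have hcB : ∀ x : H, B t (prodOver B Sg x) = prodOver B Sg (B t x) :=
        prodOver_comm (B t) B Sg
          (fun m hm x => hBB t m (fun h => ht (h ▸ hm)) x)
      rw [hcB, hcA, hcA, hcB, ← (prodOver B Sg).map_add, key t, neg_add_cancel,
        map_zero]
  -- extend to the span
  intro v hv i
  rw [hV] at hv
  refine Submodule.span_induction (p := fun v _ => A i (B i v) + B i (A i v) = 0)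
    ?_ ?_ ?_ ?_ hv
  · rintro x ⟨Sg, rfl⟩
    exact gen i Sg
  · simp
  · intro x y _ _ hx hy
    rw [map_add, map_add, map_add, map_add, add_add_add_comm, hx, hy, add_zero]
  · intro a x _ hx
    rw [map_smul, map_smul, map_smul, map_smul, ← smul_add, hx, smul_zero]
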